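/- Let f(λ,μ) be a nonzero polynomial in ℂ[λ,μ] satisfying f(λ,μ) = −f(μ,λ), write f_{ij} for the coefficient of λ^i μ^j in f, and let n be a natural number at least the degree of f in each variable. Then there exist polynomials P₁, P₂ ∈ ℂ[X] with P₁(λ)P₂(μ) − P₁(μ)P₂(λ) = f(λ,μ) if and only if the (n+1)×(n+1) antisymmetric complex matrix M = (f_{ij})_{0 ≤ i,j ≤ n} has rank 2. -/

import Mathlib

/-- Evaluation of a bivariate polynomial f(λ,μ) at a pair of complex numbers. -/
noncomputable def ev2 (f : MvPolynomial (Fin 2) ℂ) (x y : ℂ) : ℂ :=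
  MvPolynomial.eval ![x, y] f

/-- The coefficient f_{ij} of λ^i μ^j in a bivariate polynomial f(λ,μ). -/
noncomputable def coeff2 (f : MvPolynomial (Fin 2) ℂ) (i j : ℕ) : ℂ :=
  MvPolynomial.coeff (Finsupp.single 0 i + Finsupp.single 1 j) f

open Module Submodule Matrix

lemma fin2_eta (d : Fin 2 →₀ ℕ) :
    d = Finsupp.single 0 (d 0) + Finsupp.single 1 (d 1) := by
  ext k
  fin_cases k <;> simp

lemma pair_fst (i j : ℕ) :
    ((Finsupp.single (0 : Fin 2) i + Finsupp.single 1 j : Fin 2 →₀ ℕ)) 0 = i := by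
  simp [Finsupp.single_apply]

lemma pair_snd (i j : ℕ) :
    ((Finsupp.single (0 : Fin 2) i + Finsupp.single 1 j : Fin 2 →₀ ℕ)) 1 = j := by
  simp [Finsupp.single_apply]

lemma pair_inj {a b c d : ℕ}
    (h : Finsupp.single (0 : Fin 2) a + Finsupp.single 1 b
       = Finsupp.single (0 : Fin 2) c + Finsupp.single 1 d) : a = c ∧ b = d := by
  constructor
  · have h0 := DFunLike.congr_fun h 0
    rwa [pair_fst, pair_fst] at h0
  · have h1 := DFunLike.congr_fun h 1
    rwa [pair_snd, pair_snd] at h1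

lemma ev2_eq_sum (g : MvPolynomial (Fin 2) ℂ) (n : ℕ)
    (h0 : MvPolynomial.degreeOf 0 g ≤ n) (h1 : MvPolynomial.degreeOf 1 g ≤ n) (x y : ℂ) :
    ev2 g x y = ∑ i ∈ Finset.range (n+1), ∑ j ∈ Finset.range (n+1),
      coeff2 g i j * x ^ i * y ^ j := by
  classical
  have hsub : g.support ⊆ (Finset.range (n+1) ×ˢ Finset.range (n+1)).image
      (fun ij : ℕ × ℕ => Finsupp.single (0 : Fin 2) ij.1 + Finsupp.single 1 ij.2) := by
    intro d hd
    refine Finset.mem_image.2 ⟨(d 0, d 1), ?_, (fin2_eta d).symm⟩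
    refine Finset.mem_product.2 ⟨Finset.mem_range.2 (Nat.lt_succ_of_le ?_),
      Finset.mem_range.2 (Nat.lt_succ_of_le ?_)⟩
    · exact le_trans (MvPolynomial.monomial_le_degreeOf 0 hd) h0
    · exact le_trans (MvPolynomial.monomial_le_degreeOf 1 hd) h1
  rw [ev2, MvPolynomial.eval_eq']
  rw [Finset.sum_subset hsub (by
    intro d _ hd
    simp [MvPolynomial.notMem_support_iff.1 hd])]
  rw [Finset.sum_image (by
    intro a _ b _ h
    obtain ⟨h1', h2'⟩ := pair_inj h
    exact Prod.ext h1' h2')]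
  rw [Finset.sum_product]
  refine Finset.sum_congr rfl fun i _ => Finset.sum_congr rfl fun j _ => ?_
  rw [Fin.prod_univ_two, pair_fst, pair_snd]
  simp only [coeff2, Matrix.cons_val_zero, Matrix.cons_val_one, Matrix.head_cons]
  ring

lemma eval_aevalX (P : Polynomial ℂ) (v : Fin 2 → ℂ) (k : Fin 2) :
    MvPolynomial.eval v (Polynomial.aeval (MvPolynomial.X k) P) = P.eval (v k) := by
  have hcomp : (MvPolynomial.eval v).comp (algebraMap ℂ (MvPolynomial (Fin 2) ℂ))
      = RingHom.id ℂ := by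
    ext a
    simp [MvPolynomial.algebraMap_eq]
  rw [Polynomial.aeval_def, Polynomial.hom_eval₂, hcomp, MvPolynomial.eval_X]
  rfl

lemma coeff2_prod (P Q : Polynomial ℂ) (i j : ℕ) :
    coeff2 (Polynomial.aeval (MvPolynomial.X 0) P * Polynomial.aeval (MvPolynomial.X 1) Q) i j
      = P.coeff i * Q.coeff j := by
  classical
  have hA : ∀ (k : Fin 2) (P : Polynomial ℂ), Polynomial.aeval (MvPolynomial.X k) P
      = ∑ e ∈ P.support, MvPolynomial.monomial (Finsupp.single k e) (P.coeff e) := by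
    intro k P
    rw [Polynomial.aeval_def, Polynomial.eval₂_eq_sum, Polynomial.sum_def]
    refine Finset.sum_congr rfl fun e _ => ?_
    rw [MvPolynomial.algebraMap_eq, MvPolynomial.C_mul_X_pow_eq_monomial]
  rw [hA 0 P, hA 1 Q, Finset.sum_mul_sum]
  unfold coeff2
  simp only [MvPolynomial.coeff_sum, MvPolynomial.monomial_mul, MvPolynomial.coeff_monomial]
  rw [Finset.sum_eq_single i
    (fun e _ hei => Finset.sum_eq_zero fun e' _ => if_neg fun hc => hei (pair_inj hc).1)
    (fun hi => Finset.sum_eq_zero fun e' _ => by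
      by_cases hc : Finsupp.single (0 : Fin 2) i + Finsupp.single 1 e'
          = Finsupp.single (0 : Fin 2) i + Finsupp.single 1 j
      · rw [if_pos hc, Polynomial.notMem_support_iff.1 hi, zero_mul]
      · rw [if_neg hc])]
  rw [Finset.sum_eq_single j
    (fun e' _ hej => if_neg fun hc => hej (pair_inj hc).2)
    (fun hj => by
      rw [if_pos rfl, Polynomial.notMem_support_iff.1 hj, mul_zero])]
  rw [if_pos rfl]

lemma coeff2_skew (f : MvPolynomial (Fin 2) ℂ)
    (hskew : ∀ l m : ℂ, ev2 f l m = - ev2 f m l) (i j : ℕ) :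
    coeff2 f j i = - coeff2 f i j := by
  have hren : MvPolynomial.rename (Equiv.swap (0 : Fin 2) 1) f = -f := by
    apply MvPolynomial.funext
    intro v
    rw [MvPolynomial.eval_rename, map_neg]
    have h1 : v ∘ (Equiv.swap (0 : Fin 2) 1) = ![v 1, v 0] := by
      funext k
      fin_cases k <;> simp [Equiv.swap_apply_def]
    have h2 : v = ![v 0, v 1] := by
      funext k
      fin_cases k <;> rfl
    rw [h1]
    conv_rhs => rw [h2]
    exact hskew (v 1) (v 0)
  have h3 : Finsupp.mapDomain (Equiv.swap (0 : Fin 2) 1)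
      (Finsupp.single (0 : Fin 2) i + Finsupp.single 1 j)
      = Finsupp.single (0 : Fin 2) j + Finsupp.single 1 i := by
    rw [Finsupp.mapDomain_add, Finsupp.mapDomain_single, Finsupp.mapDomain_single,
      Equiv.swap_apply_left, Equiv.swap_apply_right, add_comm]
  have h4 := MvPolynomial.coeff_rename_mapDomain (Equiv.swap (0 : Fin 2) 1)
      (Equiv.injective _) f (Finsupp.single 0 i + Finsupp.single 1 j)
  rw [h3, hren, MvPolynomial.coeff_neg] at h4
  unfold coeff2
  rw [← h4, neg_neg]

lemma diag_zero {k : ℕ} (N : Matrix (Fin k) (Fin k) ℂ)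
    (hsk : ∀ i j, N j i = - N i j) (i : Fin k) : N i i = 0 := by
  have h := hsk i i
  linear_combination h / 2

lemma pair_indep {k : ℕ} (N : Matrix (Fin k) (Fin k) ℂ)
    (hsk : ∀ i j, N j i = - N i j) {i0 j0 : Fin k} (h0 : N i0 j0 ≠ 0) :
    LinearIndependent ℂ ![Nᵀ j0, Nᵀ i0] := by
  rw [LinearIndependent.pair_iff]
  intro s t hst
  have e1 := congrFun hst i0
  have e2 := congrFun hst j0
  simp only [Pi.add_apply, Pi.smul_apply, Matrix.transpose_apply, smul_eq_mul,
    Pi.zero_apply, diag_zero N hsk, mul_zero, add_zero, zero_add] at e1 e2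
  have hs : s = 0 := by
    rcases mul_eq_zero.1 e1 with h | h
    · exact h
    · exact absurd h h0
  refine ⟨hs, ?_⟩
  rcases mul_eq_zero.1 e2 with h | h
  · exact h
  · rw [hsk i0 j0] at h
    exact absurd (neg_eq_zero.1 h) h0

lemma span_pair_le {k : ℕ} (N : Matrix (Fin k) (Fin k) ℂ) (i0 j0 : Fin k) :
    span ℂ (Set.range ![Nᵀ j0, Nᵀ i0]) ≤ span ℂ (Set.range Nᵀ) := by
  apply span_mono
  rintro - ⟨m, rfl⟩
  fin_cases m
  · exact ⟨j0, rfl⟩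
  · exact ⟨i0, rfl⟩

lemma rank_two_aux {k : ℕ} (N : Matrix (Fin k) (Fin k) ℂ) (x y : Fin k → ℂ)
    (hN : ∀ i j, N i j = x i * y j - y i * x j)
    {i0 j0 : Fin k} (h0 : N i0 j0 ≠ 0) : N.rank = 2 := by
  have hsk : ∀ i j, N j i = - N i j := fun i j => by rw [hN, hN]; ring
  rw [Matrix.rank_eq_finrank_span_cols]
  apply le_antisymm
  · have hrange : Set.range ![x, y] = {x, y} := Matrix.range_cons_cons_empty x y _
    have hle : span ℂ (Set.range Nᵀ) ≤ span ℂ (Set.range ![x, y]) := by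
      rw [span_le]
      rintro - ⟨j, rfl⟩
      rw [SetLike.mem_coe, hrange, mem_span_pair]
      refine ⟨y j, -(x j), ?_⟩
      funext i
      simp only [Pi.add_apply, Pi.smul_apply, smul_eq_mul, Matrix.transpose_apply, hN]
      ring
    calc finrank ℂ (span ℂ (Set.range Nᵀ)) ≤ finrank ℂ (span ℂ (Set.range ![x, y])) :=
          Submodule.finrank_mono hle
      _ ≤ 2 := (finrank_range_le_card ![x, y]).trans (by simp)
  · have hind := pair_indep N hsk h0
    have hmono := Submodule.finrank_mono (span_pair_le N i0 j0)
    rwa [finrank_span_eq_card hind, Fintype.card_fin] at hmono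

lemma exists_decomp {k : ℕ} (N : Matrix (Fin k) (Fin k) ℂ)
    (hsk : ∀ i j, N j i = - N i j) (hrk : N.rank = 2) :
    ∃ x y : Fin k → ℂ, ∀ i j, N i j = x i * y j - y i * x j := by
  have hN0 : ∃ i0 j0, N i0 j0 ≠ 0 := by
    by_contra h
    push_neg at h
    have hzero : N = 0 := by
      ext i j
      exact h i j
    rw [hzero, Matrix.rank_zero] at hrk
    exact two_ne_zero hrk.symm
  obtain ⟨i0, j0, h0⟩ := hN0
  have hind := pair_indep N hsk h0
  have heq : span ℂ (Set.range ![Nᵀ j0, Nᵀ i0]) = span ℂ (Set.range Nᵀ) := by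
    apply Submodule.eq_of_le_of_finrank_le (span_pair_le N i0 j0)
    rw [finrank_span_eq_card hind, Fintype.card_fin]
    rw [Matrix.rank_eq_finrank_span_cols] at hrk
    exact le_of_eq hrk
  have hrange : Set.range ![Nᵀ j0, Nᵀ i0] = {Nᵀ j0, Nᵀ i0} :=
    Matrix.range_cons_cons_empty _ _ _
  refine ⟨Nᵀ i0, fun i => N i j0 / N i0 j0, fun i j => ?_⟩
  have hmem : Nᵀ j ∈ span ℂ (Set.range ![Nᵀ j0, Nᵀ i0]) := by
    rw [heq]
    exact subset_span ⟨j, rfl⟩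
  rw [hrange, mem_span_pair] at hmem
  obtain ⟨a, b, hab⟩ := hmem
  have e0 := congrFun hab i0
  have e1 := congrFun hab j0
  have ei := congrFun hab i
  simp only [Pi.add_apply, Pi.smul_apply, smul_eq_mul, Matrix.transpose_apply,
    diag_zero N hsk, mul_zero, add_zero, zero_add] at e0 e1 ei
  -- e0 : a * N i0 j0 = N i0 j
  -- e1 : b * N j0 i0 = N j0 j
  -- ei : a * N i j0 + b * N i i0 = N i j
  have s1 : N i0 j = - N j i0 := hsk j i0
  have s2 : N j0 i0 = - N i0 j0 := hsk i0 j0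
  have s3 : N j0 j = - N j j0 := hsk j j0
  have key : N i0 j0 * N i j = N i i0 * N j j0 - N i j0 * N j i0 := by
    linear_combination (-(N i0 j0)) * ei + (N i j0) * e0 + (N i j0) * s1
      + (-(N i i0)) * e1 + (-(N i i0)) * s3 + (b * N i i0) * s2
  simp only [Matrix.transpose_apply]
  field_simp
  linear_combination key

theorem stmt_5 (f : MvPolynomial (Fin 2) ℂ) (hf : f ≠ 0)
    (hskew : ∀ l m : ℂ, ev2 f l m = - ev2 f m l)
    (n : ℕ) (hn0 : MvPolynomial.degreeOf 0 f ≤ n) (hn1 : MvPolynomial.degreeOf 1 f ≤ n) :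
    (∃ P₁ P₂ : Polynomial ℂ, ∀ l m : ℂ,
        P₁.eval l * P₂.eval m - P₁.eval m * P₂.eval l = ev2 f l m) ↔
    (Matrix.of fun i j : Fin (n + 1) => coeff2 f i j).rank = 2 := by
  classical
  constructor
  · rintro ⟨P₁, P₂, hP⟩
    have hfg : f = Polynomial.aeval (MvPolynomial.X (0 : Fin 2)) P₁
          * Polynomial.aeval (MvPolynomial.X (1 : Fin 2)) P₂
        - Polynomial.aeval (MvPolynomial.X (0 : Fin 2)) P₂
          * Polynomial.aeval (MvPolynomial.X (1 : Fin 2)) P₁ := by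
      apply MvPolynomial.funext
      intro v
      rw [_root_.map_sub, _root_.map_mul, _root_.map_mul, eval_aevalX, eval_aevalX, eval_aevalX, eval_aevalX]
      have hv : v = ![v 0, v 1] := by
        funext k
        fin_cases k <;> rfl
      have hP' := hP (v 0) (v 1)
      rw [ev2] at hP'
      conv_lhs => rw [hv]
      rw [← hP']
      ring
    have hco : ∀ i j : ℕ, coeff2 f i j
        = P₁.coeff i * P₂.coeff j - P₂.coeff i * P₁.coeff j := by
      intro i j
      rw [hfg]
      unfold coeff2
      rw [MvPolynomial.coeff_sub]
      have h1 := coeff2_prod P₁ P₂ i j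
      have h2 := coeff2_prod P₂ P₁ i j
      unfold coeff2 at h1 h2
      rw [h1, h2]
    obtain ⟨d, hd⟩ := MvPolynomial.ne_zero_iff.1 hf
    have hdsup : d ∈ f.support := MvPolynomial.mem_support_iff.2 hd
    have hd0 : d 0 ≤ n := le_trans (MvPolynomial.monomial_le_degreeOf 0 hdsup) hn0
    have hd1 : d 1 ≤ n := le_trans (MvPolynomial.monomial_le_degreeOf 1 hdsup) hn1
    have hM0 : (Matrix.of fun i j : Fin (n + 1) => coeff2 f i j)
        ⟨d 0, Nat.lt_succ_of_le hd0⟩ ⟨d 1, Nat.lt_succ_of_le hd1⟩ ≠ 0 := by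
      show coeff2 f (d 0) (d 1) ≠ 0
      unfold coeff2
      rw [← fin2_eta d]
      exact hd
    exact rank_two_aux _ (fun i : Fin (n+1) => P₁.coeff i) (fun i : Fin (n+1) => P₂.coeff i)
      (fun i j => by rw [Matrix.of_apply, hco]) hM0
  · intro hrk
    have hsk : ∀ i j : Fin (n+1), (Matrix.of fun i j : Fin (n + 1) => coeff2 f i j) j i
        = - (Matrix.of fun i j : Fin (n + 1) => coeff2 f i j) i j :=
      fun i j => coeff2_skew f hskew i j
    obtain ⟨x, y, hxy⟩ := exists_decomp _ hsk hrk
    refine ⟨∑ i : Fin (n+1), Polynomial.C (x i) * Polynomial.X ^ (i : ℕ),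
            ∑ i : Fin (n+1), Polynomial.C (y i) * Polynomial.X ^ (i : ℕ), ?_⟩
    intro l m
    have hev : ∀ (z : Fin (n+1) → ℂ) (t : ℂ),
        Polynomial.eval t (∑ i : Fin (n+1), Polynomial.C (z i) * Polynomial.X ^ (i : ℕ))
        = ∑ i : Fin (n+1), z i * t ^ (i : ℕ) := by
      intro z t
      rw [Polynomial.eval_finset_sum]
      simp
    rw [hev, hev, hev, hev, ev2_eq_sum f n hn0 hn1]
    have step : (∑ i : Fin (n+1), x i * l ^ (i : ℕ)) * (∑ i : Fin (n+1), y i * m ^ (i : ℕ))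
        - (∑ i : Fin (n+1), x i * m ^ (i : ℕ)) * (∑ i : Fin (n+1), y i * l ^ (i : ℕ))
        = ∑ i : Fin (n+1), ∑ j : Fin (n+1),
            coeff2 f (i : ℕ) (j : ℕ) * l ^ (i : ℕ) * m ^ (j : ℕ) := by
      rw [Finset.sum_mul_sum, Finset.sum_mul_sum]
      rw [Finset.sum_comm (s := (Finset.univ : Finset (Fin (n+1))))
        (t := (Finset.univ : Finset (Fin (n+1))))
        (f := fun i j => x i * m ^ (i : ℕ) * (y j * l ^ (j : ℕ)))]
      rw [← Finset.sum_sub_distrib]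
      refine Finset.sum_congr rfl fun i _ => ?_
      rw [← Finset.sum_sub_distrib]
      refine Finset.sum_congr rfl fun j _ => ?_
      have hc : coeff2 f (i : ℕ) (j : ℕ) = x i * y j - y i * x j := hxy i j
      rw [hc]
      ring
    rw [step]
    calc ∑ i : Fin (n+1), ∑ j : Fin (n+1),
            coeff2 f (i : ℕ) (j : ℕ) * l ^ (i : ℕ) * m ^ (j : ℕ)
        = ∑ i : Fin (n+1), ∑ j ∈ Finset.range (n+1),
            coeff2 f (i : ℕ) j * l ^ (i : ℕ) * m ^ j :=
          Finset.sum_congr rfl fun i _ =>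
            Fin.sum_univ_eq_sum_range (fun j => coeff2 f (i : ℕ) j * l ^ (i : ℕ) * m ^ j) (n+1)
      _ = ∑ i ∈ Finset.range (n+1), ∑ j ∈ Finset.range (n+1),
            coeff2 f i j * l ^ i * m ^ j :=
          Fin.sum_univ_eq_sum_range
            (fun i => ∑ j ∈ Finset.range (n+1), coeff2 f i j * l ^ i * m ^ j) (n+1)
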